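/- There is an absolute constant C such that the following holds. Let a : {dyadic intervals of ℝ} → [0,∞) satisfy the Carleson condition Σ_{I dyadic, I ⊆ J} a(I) ≤ A · |J| for every dyadic interval J, where A ≥ 0. Then for every h ∈ L²(ℝ), Σ_{I dyadic} a(I) · ( (1/|I|) ∫_I |h| )² ≤ C · A · ‖h‖_{L²(ℝ)}². -/

import Mathlib

open MeasureTheory
open scoped ENNReal

/-- The dyadic interval `[2^j m, 2^j (m+1))`. -/
noncomputable def dyadicI (j m : ℤ) : Set ℝ :=
  Set.Ico ((2 : ℝ) ^ j * m) ((2 : ℝ) ^ j * (m + 1))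

namespace Stmt15

lemma two_zpow_pos (j : ℤ) : (0:ℝ) < 2 ^ j := zpow_pos (by norm_num) j

lemma e_two_zpow_ne_zero (j : ℤ) : ((2:ℝ≥0∞)^j) ≠ 0 :=
  (ENNReal.zpow_pos (by norm_num) (by norm_num) j).ne'

lemma e_two_zpow_ne_top (j : ℤ) : ((2:ℝ≥0∞)^j) ≠ ⊤ := by
  rcases j with n | n
  · simpa using ENNReal.pow_ne_top (by norm_num : (2:ℝ≥0∞) ≠ ⊤)
  · simp [zpow_negSucc]

lemma ofReal_two_zpow (j : ℤ) : ENNReal.ofReal ((2:ℝ)^j) = (2:ℝ≥0∞)^j := by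
  rw [← Real.rpow_intCast 2 j, ← ENNReal.ofReal_rpow_of_pos (by norm_num), ← ENNReal.rpow_intCast]
  norm_num

lemma measurableSet_dyadicI (j m : ℤ) : MeasurableSet (dyadicI j m) :=
  measurableSet_Ico

lemma volume_dyadicI (j m : ℤ) : volume (dyadicI j m) = (2:ℝ≥0∞)^j := by
  rw [dyadicI, Real.volume_Ico, ← ofReal_two_zpow]
  congr 1
  ring

lemma left_mem_dyadicI (j m : ℤ) : (2:ℝ)^j * m ∈ dyadicI j m := by
  exact ⟨le_refl _, by nlinarith [two_zpow_pos j]⟩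

lemma dyadic_disjoint_same {j m m' : ℤ} (h : m ≠ m') :
    Disjoint (dyadicI j m) (dyadicI j m') := by
  have key : ∀ m₁ m₂ : ℤ, m₁ < m₂ → Disjoint (dyadicI j m₁) (dyadicI j m₂) := by
    intro m₁ m₂ hlt
    rw [dyadicI, dyadicI, Set.Ico_disjoint_Ico]
    have h1 : (2:ℝ)^j * (m₁+1) ≤ 2^j * m₂ := by
      have : ((m₁:ℝ)+1) ≤ m₂ := by exact_mod_cast hlt
      nlinarith [two_zpow_pos j]
    calc min ((2:ℝ)^j * (m₁+1)) ((2:ℝ)^j * (m₂+1)) ≤ (2:ℝ)^j * (m₁+1) := min_le_left _ _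
      _ ≤ (2:ℝ)^j * m₂ := h1
      _ ≤ max ((2:ℝ)^j * m₁) ((2:ℝ)^j * m₂) := le_max_right _ _
  rcases h.lt_or_gt with hlt | hlt
  · exact key _ _ hlt
  · exact (key _ _ hlt).symm

lemma subset_parent (j m : ℤ) : dyadicI j m ⊆ dyadicI (j+1) (m / 2) := by
  intro x hx
  obtain ⟨h1, h2⟩ := hx
  have hm : 2 * (m / 2) + m % 2 = m := Int.mul_ediv_add_emod m 2
  have hr0 : 0 ≤ m % 2 := Int.emod_nonneg m (by norm_num)
  have hr1 : m % 2 < 2 := Int.emod_lt_of_pos m (by norm_num)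
  have hz : (2:ℝ)^(j+1) = 2^j * 2 := by
    rw [zpow_add_one₀ (by norm_num : (2:ℝ) ≠ 0)]
  have hmr : (m:ℝ) = 2 * ((m/2 : ℤ):ℝ) + ((m % 2 : ℤ):ℝ) := by exact_mod_cast hm.symm
  have hr0' : (0:ℝ) ≤ ((m % 2 : ℤ):ℝ) := by exact_mod_cast hr0
  have hr1' : ((m % 2 : ℤ):ℝ) ≤ 1 := by exact_mod_cast (by omega : m % 2 ≤ 1)
  constructor
  · rw [hz]
    nlinarith [two_zpow_pos j]
  · rw [hz]
    nlinarith [two_zpow_pos j]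

def ancIdx (m : ℤ) : ℕ → ℤ
  | 0 => m
  | n+1 => ancIdx m n / 2

lemma ancIdx_zero (m : ℤ) : ancIdx m 0 = m := rfl

lemma subset_anc (j m : ℤ) (n : ℕ) : dyadicI j m ⊆ dyadicI (j + n) (ancIdx m n) := by
  induction n with
  | zero => simpa [ancIdx_zero] using subset_rfl
  | succ n ih =>
      have h2 : (j + ((n+1:ℕ) : ℤ)) = (j + (n:ℕ)) + 1 := by push_cast; ring
      rw [h2]
      exact ih.trans (subset_parent (j + (n:ℕ)) (ancIdx m n))

lemma dyadicI_nonempty (j m : ℤ) : (dyadicI j m).Nonempty :=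
  ⟨_, left_mem_dyadicI j m⟩

lemma level_le_of_subset {j m j' m' : ℤ} (h : dyadicI j m ⊆ dyadicI j' m') : j ≤ j' := by
  by_contra hc
  push_neg at hc
  have hv := measure_mono (μ := volume) h
  rw [volume_dyadicI, volume_dyadicI] at hv
  have := ENNReal.zpow_le_of_le (by norm_num : (1:ℝ≥0∞) ≤ 2) hc.le
  -- 2^j' ≤ 2^j... need strict contradiction
  have hlt : (2:ℝ≥0∞)^j' < (2:ℝ≥0∞)^j := by
    rw [← ofReal_two_zpow, ← ofReal_two_zpow]
    rw [ENNReal.ofReal_lt_ofReal_iff (two_zpow_pos j)]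
    exact zpow_lt_zpow_right₀ (by norm_num) hc
  exact absurd hv (not_le.mpr hlt)

lemma nested_of_inter {j j' m m' : ℤ} (hj : j ≤ j')
    (hx : (dyadicI j m ∩ dyadicI j' m').Nonempty) : dyadicI j m ⊆ dyadicI j' m' := by
  obtain ⟨x, hx1, hx2⟩ := hx
  set n := (j' - j).toNat with hn
  have hjn : j + (n:ℤ) = j' := by omega
  have hsub := subset_anc j m n
  rw [hjn] at hsub
  by_cases he : ancIdx m n = m'
  · rwa [he] at hsub
  · exact absurd hx2 (Set.disjoint_left.mp (dyadic_disjoint_same he) (hsub hx1))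

lemma eq_anc_of_subset {j m j' m' : ℤ} (h : dyadicI j m ⊆ dyadicI j' m') :
    ∃ n : ℕ, j' = j + (n:ℤ) ∧ m' = ancIdx m n := by
  have hj := level_le_of_subset h
  refine ⟨(j' - j).toNat, by omega, ?_⟩
  have hjn : j + (((j' - j).toNat : ℕ):ℤ) = j' := by omega
  have hsub := subset_anc j m (j' - j).toNat
  rw [hjn] at hsub
  by_contra he
  obtain ⟨x, hx⟩ := dyadicI_nonempty j m
  exact Set.disjoint_left.mp (dyadic_disjoint_same he) (h hx) (hsub hx)



noncomputable def davg (F : ℝ → ℝ≥0∞) (j m : ℤ) : ℝ≥0∞ :=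
  ((2:ℝ≥0∞)^j)⁻¹ * ∫⁻ x in dyadicI j m, F x

lemma rpow_half_sq (a : ℝ≥0∞) : (a ^ ((1:ℝ)/2)) ^ (2:ℕ) = a := by
  rw [← ENNReal.rpow_natCast (a ^ ((1:ℝ)/2)) 2, ← ENNReal.rpow_mul]
  norm_num

lemma sq_lintegral_le {F : ℝ → ℝ≥0∞} (hF : AEMeasurable F volume) (j m : ℤ) :
    (∫⁻ x in dyadicI j m, F x) ^ (2:ℕ) ≤ (2:ℝ≥0∞)^j * ∫⁻ x, F x ^ (2:ℕ) := by
  have hconj : Real.HolderConjugate 2 2 := Real.HolderConjugate.two_two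
  have h := ENNReal.lintegral_mul_le_Lp_mul_Lq (volume.restrict (dyadicI j m)) hconj
    (hF.restrict) (aemeasurable_const (b := (1:ℝ≥0∞)))
  simp only [Pi.mul_apply, Pi.one_apply, mul_one, ENNReal.one_rpow] at h
  rw [lintegral_const, Measure.restrict_apply_univ, volume_dyadicI, one_mul] at h
  calc (∫⁻ x in dyadicI j m, F x) ^ (2:ℕ)
      ≤ ((∫⁻ x in dyadicI j m, F x ^ (2:ℝ)) ^ ((1:ℝ)/2) * ((2:ℝ≥0∞)^j) ^ ((1:ℝ)/2)) ^ (2:ℕ) :=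
        pow_le_pow_left₀ zero_le h 2
    _ = (∫⁻ x in dyadicI j m, F x ^ (2:ℝ)) * (2:ℝ≥0∞)^j := by
        rw [mul_pow, rpow_half_sq, rpow_half_sq]
    _ = (∫⁻ x in dyadicI j m, F x ^ (2:ℕ)) * (2:ℝ≥0∞)^j := by
        congr 1
        refine lintegral_congr fun x => ?_
        rw [← ENNReal.rpow_natCast (F x) 2]
        norm_num
    _ ≤ (∫⁻ x, F x ^ (2:ℕ)) * (2:ℝ≥0∞)^j := by
        gcongr
        exact Measure.restrict_le_self
    _ = (2:ℝ≥0∞)^j * ∫⁻ x, F x ^ (2:ℕ) := mul_comm _ _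

lemma davg_sq_le {F : ℝ → ℝ≥0∞} (hF : AEMeasurable F volume) (j m : ℤ) :
    (davg F j m) ^ (2:ℕ) ≤ ((2:ℝ≥0∞)^j)⁻¹ * ∫⁻ x, F x ^ (2:ℕ) := by
  rw [davg, mul_pow]
  calc (((2:ℝ≥0∞)^j)⁻¹)^(2:ℕ) * (∫⁻ x in dyadicI j m, F x) ^ (2:ℕ)
      ≤ (((2:ℝ≥0∞)^j)⁻¹)^(2:ℕ) * ((2:ℝ≥0∞)^j * ∫⁻ x, F x ^ (2:ℕ)) := by
        gcongr
        exact sq_lintegral_le hF j m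
    _ = ((2:ℝ≥0∞)^j)⁻¹ * ((((2:ℝ≥0∞)^j)⁻¹ * (2:ℝ≥0∞)^j) * ∫⁻ x, F x ^ (2:ℕ)) := by ring
    _ = ((2:ℝ≥0∞)^j)⁻¹ * ∫⁻ x, F x ^ (2:ℕ) := by
        rw [ENNReal.inv_mul_cancel (e_two_zpow_ne_zero j) (e_two_zpow_ne_top j), one_mul]

lemma davg_ne_top {F : ℝ → ℝ≥0∞} (hF : AEMeasurable F volume)
    (hT : (∫⁻ x, F x ^ (2:ℕ)) ≠ ⊤) (j m : ℤ) : davg F j m ≠ ⊤ := by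
  intro htop
  have h1 := davg_sq_le hF j m
  rw [htop, ENNReal.top_pow (by norm_num)] at h1
  exact ENNReal.mul_ne_top (ENNReal.inv_ne_top.mpr (e_two_zpow_ne_zero j)) hT (top_le_iff.mp h1)


lemma exists_maximal {F : ℝ → ℝ≥0∞} (hF : AEMeasurable F volume)
    (hT : (∫⁻ x, F x ^ (2:ℕ)) ≠ ⊤) {lam : ℝ≥0∞} (hl0 : lam ≠ 0) (hlt : lam ≠ ⊤)
    {j m : ℤ} (h : lam < davg F j m) :
    ∃ p : ℤ × ℤ, dyadicI j m ⊆ dyadicI p.1 p.2 ∧ lam < davg F p.1 p.2 ∧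
      ∀ q : ℤ × ℤ, dyadicI p.1 p.2 ⊆ dyadicI q.1 q.2 → lam < davg F q.1 q.2 → q = p := by
  set T := ∫⁻ x, F x ^ (2:ℕ) with hTdef
  set N : Set ℕ := {n | lam < davg F (j + n) (ancIdx m n)} with hN
  have h0 : 0 ∈ N := by
    simp only [hN, Set.mem_setOf_eq, Nat.cast_zero, add_zero, ancIdx_zero]
    exact h
  -- bound elements of N
  have hbd : ∀ n ∈ N, (2:ℝ≥0∞)^(j + (n:ℤ)) ≤ lam⁻¹ * lam⁻¹ * T := by
    intro n hn
    have h1 : lam ^ (2:ℕ) ≤ ((2:ℝ≥0∞)^(j + (n:ℤ)))⁻¹ * T :=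
      le_trans (pow_le_pow_left₀ zero_le (le_of_lt hn) 2) (davg_sq_le hF _ _)
    set c := (2:ℝ≥0∞)^(j + (n:ℤ)) with hc
    have hc0 : c ≠ 0 := e_two_zpow_ne_zero _
    have hctop : c ≠ ⊤ := e_two_zpow_ne_top _
    -- lam^2 * c ≤ T
    have h2 : lam * lam * c ≤ T := by
      calc lam * lam * c = lam ^ (2:ℕ) * c := by ring
        _ ≤ ((2:ℝ≥0∞)^(j + (n:ℤ)))⁻¹ * T * c := mul_le_mul_left h1 c
        _ = T * (c⁻¹ * c) := by ring
        _ = T := by rw [ENNReal.inv_mul_cancel hc0 hctop, mul_one]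
    calc c = lam⁻¹ * lam⁻¹ * (lam * lam * c) := by
          rw [← mul_assoc, ← mul_assoc]
          rw [mul_assoc (lam⁻¹) (lam⁻¹) lam, ENNReal.inv_mul_cancel hl0 hlt, mul_one,
            ENNReal.inv_mul_cancel hl0 hlt, one_mul]
      _ ≤ lam⁻¹ * lam⁻¹ * T := mul_le_mul_right h2 _
  -- N is bounded above
  have hBne : lam⁻¹ * lam⁻¹ * T ≠ ⊤ :=
    ENNReal.mul_ne_top (ENNReal.mul_ne_top (ENNReal.inv_ne_top.mpr hl0)
      (ENNReal.inv_ne_top.mpr hl0)) hT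
  obtain ⟨k, hk⟩ := ENNReal.exists_nat_gt hBne
  have hk2 : lam⁻¹ * lam⁻¹ * T < (2:ℝ≥0∞) ^ ((k:ℤ)) := by
    refine hk.trans_le ?_
    rw [zpow_natCast]
    calc ((k:ℕ):ℝ≥0∞) ≤ ((2^k : ℕ) : ℝ≥0∞) := by exact_mod_cast Nat.le_of_lt (Nat.lt_two_pow_self)
      _ = (2:ℝ≥0∞)^k := by push_cast; ring
  have hub : BddAbove N := by
    refine ⟨(k - j).toNat, fun n hn => ?_⟩
    have h1 := (hbd n hn).trans_lt hk2
    by_contra hcon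
    push_neg at hcon
    have : (k:ℤ) ≤ j + (n:ℤ) := by omega
    exact absurd h1 (not_lt.mpr (ENNReal.zpow_le_of_le (by norm_num) this))
  set n0 := sSup N with hn0
  have hmem : n0 ∈ N := Nat.sSup_mem ⟨0, h0⟩ hub
  refine ⟨(j + (n0:ℤ), ancIdx m n0), subset_anc j m n0, hmem, ?_⟩
  rintro ⟨jq, mq⟩ hsub hq
  have hsub2 : dyadicI j m ⊆ dyadicI jq mq := (subset_anc j m n0).trans hsub
  obtain ⟨n', hn'1, hn'2⟩ := eq_anc_of_subset hsub2
  have hn'N : n' ∈ N := by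
    simp only [hN, Set.mem_setOf_eq]
    rw [← hn'1, ← hn'2]
    exact hq
  have hle : n' ≤ n0 := le_csSup hub hn'N
  have hge : (j + (n0:ℤ)) ≤ jq := level_le_of_subset hsub
  have : n' = n0 := by omega
  subst this
  simp [hn'1, hn'2]

lemma sq_le_tsum {x : ℝ≥0∞} (hx : x ≠ ⊤) :
    x ^ (2:ℕ) ≤ ∑' k : ℤ, (if (2:ℝ≥0∞)^k < x then 16 * ((2:ℝ≥0∞)^k)^(2:ℕ) else 0) := by
  rcases eq_or_ne x 0 with rfl | h0
  · simp
  have hr : 0 < x.toReal := ENNReal.toReal_pos h0 hx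
  obtain ⟨K, hK1, hK2⟩ := exists_mem_Ico_zpow hr (by norm_num : (1:ℝ) < 2)
  have hxval : x = ENNReal.ofReal x.toReal := (ENNReal.ofReal_toReal hx).symm
  have hcond : (2:ℝ≥0∞)^(K-1) < x := by
    rw [hxval, ← ofReal_two_zpow]
    rw [ENNReal.ofReal_lt_ofReal_iff hr]
    calc (2:ℝ)^(K-1) < 2^K := zpow_lt_zpow_right₀ (by norm_num) (by omega)
      _ ≤ x.toReal := hK1
  have hxle : x ≤ (2:ℝ≥0∞)^(K+1) := by
    rw [hxval, ← ofReal_two_zpow]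
    exact ENNReal.ofReal_le_ofReal hK2.le
  have hterm : x ^ (2:ℕ) ≤ 16 * ((2:ℝ≥0∞)^(K-1))^(2:ℕ) := by
    calc x ^ (2:ℕ) ≤ ((2:ℝ≥0∞)^(K+1)) ^ (2:ℕ) := pow_le_pow_left₀ zero_le hxle 2
      _ = 16 * ((2:ℝ≥0∞)^(K-1))^(2:ℕ) := by
          have e1 : (2:ℝ≥0∞)^(K+1) = (2:ℝ≥0∞)^(K-1) * 4 := by
            rw [show K+1 = (K-1) + (1+1) by ring, ENNReal.zpow_add (by norm_num) (by norm_num),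
              ENNReal.zpow_add (by norm_num) (by norm_num), zpow_one]
            norm_num
          rw [e1]
          ring
  calc x ^ (2:ℕ) ≤ (if (2:ℝ≥0∞)^(K-1) < x then 16 * ((2:ℝ≥0∞)^(K-1))^(2:ℕ) else 0) := by
        rw [if_pos hcond]; exact hterm
    _ ≤ _ := ENNReal.le_tsum (K-1)

lemma tsum_pow_le {y : ℝ≥0∞} (hy : y ≠ ⊤) :
    ∑' k : ℤ, (if (2:ℝ≥0∞)^k < 2*y then (2:ℝ≥0∞)^k else 0) ≤ 4*y := by
  rcases eq_or_ne y 0 with rfl | h0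
  · simp
  have h2y0 : (2*y) ≠ 0 := by simp [h0]
  have h2yt : (2*y) ≠ ⊤ := ENNReal.mul_ne_top (by norm_num) hy
  have hr : 0 < (2*y).toReal := ENNReal.toReal_pos h2y0 h2yt
  obtain ⟨K, hK1, hK2⟩ := exists_mem_Ico_zpow hr (by norm_num : (1:ℝ) < 2)
  have hyval : 2*y = ENNReal.ofReal (2*y).toReal := (ENNReal.ofReal_toReal h2yt).symm
  -- pointwise bound by g k = if k ≤ K then 2^k else 0
  have hpt : ∀ k : ℤ, (if (2:ℝ≥0∞)^k < 2*y then (2:ℝ≥0∞)^k else 0)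
      ≤ (if k ≤ K then (2:ℝ≥0∞)^k else 0) := by
    intro k
    by_cases hc : (2:ℝ≥0∞)^k < 2*y
    · rw [if_pos hc]
      have hkK : k ≤ K := by
        by_contra hcon
        push_neg at hcon
        have : (2:ℝ)^(K+1) ≤ 2^k := zpow_le_zpow_right₀ (by norm_num) (by omega)
        have h1 : (2*y) ≤ (2:ℝ≥0∞)^k := by
          rw [hyval, ← ofReal_two_zpow]
          exact ENNReal.ofReal_le_ofReal (hK2.le.trans this)
        exact absurd hc (not_lt.mpr h1)
      rw [if_pos hkK]
    · rw [if_neg hc]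
      exact zero_le
  refine le_trans (ENNReal.tsum_le_tsum hpt) ?_
  -- compute the sum over k ≤ K
  have hsum : ∑' k : ℤ, (if k ≤ K then (2:ℝ≥0∞)^k else 0) = (2:ℝ≥0∞)^(K+1) := by
    have hinj : Function.Injective (fun n : ℕ => K - (n:ℤ)) := by
      intro a b hab
      simpa using hab
    have hzero : Function.support (fun x : ℤ => if x ≤ K then (2:ℝ≥0∞)^x else 0)
        ⊆ Set.range (fun n : ℕ => K - (n:ℤ)) := by
      intro x hx
      rcases le_or_gt x K with hle | hgt
      · exact ⟨(K - x).toNat, by show K - ((K - x).toNat:ℤ) = x; omega⟩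
      · exact absurd (by rw [if_neg (not_le.mpr hgt)] : (if x ≤ K then (2:ℝ≥0∞)^x else 0) = 0) hx
    rw [← Function.Injective.tsum_eq hinj hzero]
    have heq : ∀ n : ℕ, (if (K - (n:ℤ)) ≤ K then (2:ℝ≥0∞)^(K - (n:ℤ)) else 0)
        = (2:ℝ≥0∞)^K * (2⁻¹:ℝ≥0∞)^n := by
      intro n
      rw [if_pos (by omega), show K - (n:ℤ) = K + (-(n:ℤ)) by ring,
        ENNReal.zpow_add (by norm_num) (by norm_num)]
      congr 1
      rw [ENNReal.zpow_neg, zpow_natCast, ← ENNReal.inv_pow]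
    calc (∑' n : ℕ, (if (K - (n:ℤ)) ≤ K then (2:ℝ≥0∞)^(K - (n:ℤ)) else 0))
        = ∑' n : ℕ, (2:ℝ≥0∞)^K * (2⁻¹:ℝ≥0∞)^n := tsum_congr heq
      _ = (2:ℝ≥0∞)^K * ∑' n : ℕ, (2⁻¹:ℝ≥0∞)^n := ENNReal.tsum_mul_left
      _ = (2:ℝ≥0∞)^K * 2 := by
          rw [ENNReal.tsum_geometric, ENNReal.one_sub_inv_two]
          norm_num
      _ = (2:ℝ≥0∞)^(K+1) := by
          rw [ENNReal.zpow_add (by norm_num) (by norm_num), zpow_one]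
  rw [hsum]
  have : (2:ℝ≥0∞)^(K+1) = 2 * (2:ℝ≥0∞)^K := by
    rw [ENNReal.zpow_add (by norm_num) (by norm_num) K 1, zpow_one]
    ring
  rw [this]
  have hKy : (2:ℝ≥0∞)^K ≤ 2*y := by
    rw [hyval, ← ofReal_two_zpow]
    exact ENNReal.ofReal_le_ofReal hK1
  calc 2 * (2:ℝ≥0∞)^K ≤ 2 * (2*y) := mul_le_mul_right hKy 2
    _ = 4*y := by ring


lemma levelset {F : ℝ → ℝ≥0∞} (hF : AEMeasurable F volume)
    (hT : (∫⁻ x, F x ^ (2:ℕ)) ≠ ⊤)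
    (b : ℤ × ℤ → ℝ≥0∞) {A' : ℝ≥0∞}
    (hC : ∀ jJ mJ : ℤ, ∑' I : {q : ℤ × ℤ // dyadicI q.1 q.2 ⊆ dyadicI jJ mJ}, b I.1
        ≤ A' * (2:ℝ≥0∞)^jJ)
    {lam : ℝ≥0∞} (hl0 : lam ≠ 0) (hlt : lam ≠ ⊤) :
    ∑' q : ℤ × ℤ, (if lam < davg F q.1 q.2 then b q else 0)
      ≤ A' * (2 * lam⁻¹ * ∫⁻ x, (if lam < 2 * F x then F x else 0)) := by
  classical
  set G : ℝ → ℝ≥0∞ := fun x => if lam < 2 * F x then F x else 0 with hG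
  set M : Set (ℤ × ℤ) := {p | lam < davg F p.1 p.2 ∧
    ∀ q : ℤ × ℤ, dyadicI p.1 p.2 ⊆ dyadicI q.1 q.2 → lam < davg F q.1 q.2 → q = p} with hM
  have hdisj : ∀ p ∈ M, ∀ p' ∈ M, p ≠ p' →
      Disjoint (dyadicI p.1 p.2) (dyadicI p'.1 p'.2) := by
    intro p hp p' hp' hne
    by_contra hnd
    have hint := Set.not_disjoint_iff_nonempty_inter.mp hnd
    rcases le_total p.1 p'.1 with hle | hle
    · exact hne (hp.2 p' (nested_of_inter hle hint) hp'.1).symm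
    · have hint' : (dyadicI p'.1 p'.2 ∩ dyadicI p.1 p.2).Nonempty := by
        rwa [Set.inter_comm] at hint
      exact hne (hp'.2 p (nested_of_inter hle hint') hp.1)
  have hS : ∑' q : ℤ × ℤ, (if lam < davg F q.1 q.2 then b q else 0)
      = ∑' q : {q : ℤ × ℤ // lam < davg F q.1 q.2}, b q.1 :=
    calc ∑' q : ℤ × ℤ, (if lam < davg F q.1 q.2 then b q else 0)
        = ∑' q : ℤ × ℤ, Set.indicator {q : ℤ × ℤ | lam < davg F q.1 q.2} b q :=
          tsum_congr fun q => by simp [Set.indicator_apply]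
      _ = ∑' q : {q : ℤ × ℤ // lam < davg F q.1 q.2}, b q.1 := (tsum_subtype _ b).symm
  rw [hS]
  have hch : ∀ q : {q : ℤ × ℤ // lam < davg F q.1 q.2},
      ∃ p : ℤ × ℤ, p ∈ M ∧ dyadicI q.1.1 q.1.2 ⊆ dyadicI p.1 p.2 := by
    intro q
    obtain ⟨p, hp1, hp2, hp3⟩ := exists_maximal hF hT hl0 hlt q.2
    exact ⟨p, ⟨hp2, hp3⟩, hp1⟩
  choose Φ hΦM hΦsub using hch
  let e : {q : ℤ × ℤ // lam < davg F q.1 q.2} →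
      Σ p : M, {q : ℤ × ℤ // dyadicI q.1 q.2 ⊆ dyadicI (p:ℤ×ℤ).1 (p:ℤ×ℤ).2} :=
    fun q => ⟨⟨Φ q, hΦM q⟩, ⟨q.1, hΦsub q⟩⟩
  have he : Function.Injective e := by
    intro q q' h
    have h2 := congrArg
      (fun x : (Σ p : M, {q : ℤ × ℤ // dyadicI q.1 q.2 ⊆ dyadicI (p:ℤ×ℤ).1 (p:ℤ×ℤ).2}) => x.2.1) h
    exact Subtype.ext h2
  have h1 : ∑' q : {q : ℤ × ℤ // lam < davg F q.1 q.2}, b q.1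
      ≤ ∑' x : (Σ p : M, {q : ℤ × ℤ // dyadicI q.1 q.2 ⊆ dyadicI (p:ℤ×ℤ).1 (p:ℤ×ℤ).2}), b x.2.1 :=
    Summable.tsum_le_tsum_of_inj e he (fun c _ => zero_le) (fun q => le_of_eq rfl)
      ENNReal.summable ENNReal.summable
  refine h1.trans ?_
  rw [ENNReal.tsum_sigma']
  have h2 : ∀ p : M,
      (∑' q : {q : ℤ × ℤ // dyadicI q.1 q.2 ⊆ dyadicI (p:ℤ×ℤ).1 (p:ℤ×ℤ).2}, b q.1)
      ≤ A' * volume (dyadicI (p:ℤ×ℤ).1 (p:ℤ×ℤ).2) := by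
    intro p
    rw [volume_dyadicI]
    exact hC _ _
  have h3 : ∀ p : M, volume (dyadicI (p:ℤ×ℤ).1 (p:ℤ×ℤ).2)
      ≤ 2 * lam⁻¹ * ∫⁻ x in dyadicI (p:ℤ×ℤ).1 (p:ℤ×ℤ).2, G x := by
    intro p
    obtain ⟨havg, -⟩ := p.2
    set j := (p:ℤ×ℤ).1 with hj
    set m := (p:ℤ×ℤ).2 with hm
    have hμ : volume (dyadicI j m) = (2:ℝ≥0∞)^j := volume_dyadicI j m
    have hc0 := e_two_zpow_ne_zero j
    have hct := e_two_zpow_ne_top j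
    have hX : lam * (2:ℝ≥0∞)^j < ∫⁻ x in dyadicI j m, F x := by
      rw [davg] at havg
      have hd : lam < (∫⁻ x in dyadicI j m, F x) / (2:ℝ≥0∞)^j := by
        rw [div_eq_mul_inv, mul_comm]
        exact havg
      exact (ENNReal.lt_div_iff_mul_lt (Or.inl hc0) (Or.inl hct)).mp hd
    have hFG : ∀ x, F x ≤ G x + lam / 2 := by
      intro x
      by_cases hc : lam < 2 * F x
      · simp only [hG, if_pos hc]
        exact le_self_add
      · simp only [hG, if_neg hc, zero_add]
        refine (ENNReal.le_div_iff_mul_le (Or.inl (by norm_num)) (Or.inl (by norm_num))).mpr ?_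
        rw [mul_comm]
        exact not_lt.mp hc
    have hint : ∫⁻ x in dyadicI j m, F x
        ≤ (∫⁻ x in dyadicI j m, G x) + (lam/2) * volume (dyadicI j m) := by
      calc ∫⁻ x in dyadicI j m, F x ≤ ∫⁻ x in dyadicI j m, (G x + lam/2) :=
            lintegral_mono hFG
        _ = (∫⁻ x in dyadicI j m, G x) + ∫⁻ _x in dyadicI j m, (lam/2 : ℝ≥0∞) :=
            lintegral_add_right _ measurable_const
        _ = _ := by rw [lintegral_const, Measure.restrict_apply_univ]
    have hμt : volume (dyadicI j m) ≠ ⊤ := by rw [hμ]; exact hct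
    have hhalf : (lam/2) * volume (dyadicI j m) ≠ ⊤ :=
      ENNReal.mul_ne_top (ne_top_of_le_ne_top hlt ENNReal.half_le_self) hμt
    have hkey : (lam/2) * volume (dyadicI j m) < ∫⁻ x in dyadicI j m, G x := by
      have e1 : lam * volume (dyadicI j m)
          = (lam/2) * volume (dyadicI j m) + (lam/2) * volume (dyadicI j m) := by
        rw [← add_mul, ENNReal.add_halves]
      have hlt2 := hX.trans_le hint
      rw [← hμ, e1] at hlt2
      exact (ENNReal.add_lt_add_iff_right hhalf).mp hlt2
    calc volume (dyadicI j m) = 2 * lam⁻¹ * ((lam/2) * volume (dyadicI j m)) := by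
          rw [div_eq_mul_inv,
            show (2:ℝ≥0∞) * lam⁻¹ * (lam * 2⁻¹ * volume (dyadicI j m))
              = (lam⁻¹ * lam) * ((2:ℝ≥0∞) * 2⁻¹) * volume (dyadicI j m) by ring,
            ENNReal.inv_mul_cancel hl0 hlt,
            ENNReal.mul_inv_cancel (by norm_num) (by norm_num), one_mul, one_mul]
      _ ≤ 2 * lam⁻¹ * ∫⁻ x in dyadicI j m, G x := mul_le_mul_right hkey.le _
  have hd : Pairwise (Function.onFun Disjoint (fun p : M => dyadicI (p:ℤ×ℤ).1 (p:ℤ×ℤ).2)) := by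
    intro p p' hne
    exact hdisj p p.2 p' p'.2 (fun hh => hne (Subtype.ext hh))
  have h4 : (∑' p : M, ∫⁻ x in dyadicI (p:ℤ×ℤ).1 (p:ℤ×ℤ).2, G x) ≤ ∫⁻ x, G x := by
    refine le_trans (le_of_eq ?_) (setLIntegral_le_lintegral (⋃ p : M, dyadicI (p:ℤ×ℤ).1 (p:ℤ×ℤ).2) G)
    exact (lintegral_iUnion (fun p : M => measurableSet_dyadicI _ _) hd G).symm
  calc ∑' p : M, ∑' q : {q : ℤ × ℤ // dyadicI q.1 q.2 ⊆ dyadicI (p:ℤ×ℤ).1 (p:ℤ×ℤ).2}, b q.1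
      ≤ ∑' p : M, A' * (2 * lam⁻¹ * ∫⁻ x in dyadicI (p:ℤ×ℤ).1 (p:ℤ×ℤ).2, G x) :=
        ENNReal.tsum_le_tsum fun p => (h2 p).trans (mul_le_mul_right (h3 p) A')
    _ = A' * (2 * lam⁻¹) * ∑' p : M, ∫⁻ x in dyadicI (p:ℤ×ℤ).1 (p:ℤ×ℤ).2, G x := by
        rw [← ENNReal.tsum_mul_left]
        exact tsum_congr fun p => by ring
    _ ≤ A' * (2 * lam⁻¹) * ∫⁻ x, G x := mul_le_mul_right h4 _
    _ = A' * (2 * lam⁻¹ * ∫⁻ x, G x) := by ring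


end Stmt15

open Stmt15

/-- Carleson embedding theorem for dyadic averages (Lemma 5.7): if the nonnegative weights
`a(I)` satisfy the Carleson packing condition with constant `A`, then the weighted sum of the
squared dyadic averages of `|h|` is controlled by `C·A·‖h‖₂²`. -/
theorem stmt15 : ∃ C : ℝ, 0 < C ∧
    ∀ (a : ℤ → ℤ → ℝ), (∀ j m : ℤ, 0 ≤ a j m) →
    ∀ A : ℝ, 0 ≤ A →
    (∀ jJ mJ : ℤ,
      ∑' I : {q : ℤ × ℤ // dyadicI q.1 q.2 ⊆ dyadicI jJ mJ},
          ENNReal.ofReal (a I.1.1 I.1.2) ≤ ENNReal.ofReal (A * (2 : ℝ) ^ jJ)) →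
    ∀ h : ℝ → ℝ, MemLp h 2 volume →
      ∑' q : ℤ × ℤ,
          ENNReal.ofReal (a q.1 q.2 *
            (((2 : ℝ) ^ q.1)⁻¹ * ∫ x in dyadicI q.1 q.2, |h x|) ^ 2) ≤
        ENNReal.ofReal (C * A) * eLpNorm h 2 volume ^ 2 := by
  classical
  refine ⟨128, by norm_num, ?_⟩
  intro a ha A hA hC h hmem
  set F : ℝ → ℝ≥0∞ := fun x => ENNReal.ofReal |h x| with hF
  have hFm : AEMeasurable F volume :=
    (ENNReal.measurable_ofReal.comp continuous_abs.measurable).comp_aemeasurable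
      hmem.1.aemeasurable
  set T := ∫⁻ x, F x ^ (2:ℕ) with hTdef
  have hsn : eLpNorm h 2 volume ^ (2:ℕ) = T := by
    rw [eLpNorm_eq_lintegral_rpow_enorm_toReal (by norm_num) (by norm_num)]
    rw [show ((2:ℝ≥0∞).toReal) = (2:ℝ) by norm_num]
    rw [rpow_half_sq]
    refine lintegral_congr fun x => ?_
    rw [Real.enorm_eq_ofReal_abs, ← ENNReal.rpow_natCast]
    norm_num; rfl
  have hTne : T ≠ ⊤ := by
    rw [← hsn]
    exact ENNReal.pow_ne_top hmem.2.ne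
  set b : ℤ × ℤ → ℝ≥0∞ := fun q => ENNReal.ofReal (a q.1 q.2) with hb
  set A' := ENNReal.ofReal A with hA'
  have hC' : ∀ jJ mJ : ℤ, ∑' I : {q : ℤ × ℤ // dyadicI q.1 q.2 ⊆ dyadicI jJ mJ}, b I.1
      ≤ A' * (2:ℝ≥0∞)^jJ := by
    intro jJ mJ
    refine (hC jJ mJ).trans (le_of_eq ?_)
    rw [ENNReal.ofReal_mul hA, ofReal_two_zpow]
  have hLHS : ∀ q : ℤ × ℤ,
      ENNReal.ofReal (a q.1 q.2 * (((2:ℝ)^q.1)⁻¹ * ∫ x in dyadicI q.1 q.2, |h x|) ^ 2)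
      = b q * (davg F q.1 q.2) ^ (2:ℕ) := by
    intro q
    have hInt : IntegrableOn h (dyadicI q.1 q.2) volume := by
      haveI : Fact (volume (dyadicI q.1 q.2) < ⊤) :=
        ⟨by rw [volume_dyadicI]; exact (e_two_zpow_ne_top q.1).lt_top⟩
      exact (hmem.restrict _).integrable (by norm_num)
    have hIntAbs : Integrable (fun x => |h x|) (volume.restrict (dyadicI q.1 q.2)) := hInt.abs
    have havg0 : 0 ≤ ((2:ℝ)^q.1)⁻¹ * ∫ x in dyadicI q.1 q.2, |h x| :=
      mul_nonneg (inv_nonneg.mpr (two_zpow_pos q.1).le)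
        (integral_nonneg fun x => abs_nonneg _)
    rw [ENNReal.ofReal_mul (ha q.1 q.2), ENNReal.ofReal_pow havg0,
      ENNReal.ofReal_mul (inv_nonneg.mpr (two_zpow_pos q.1).le),
      ENNReal.ofReal_inv_of_pos (two_zpow_pos q.1), ofReal_two_zpow,
      MeasureTheory.ofReal_integral_eq_lintegral_ofReal hIntAbs
        (Filter.Eventually.of_forall fun x => abs_nonneg _)]
    rfl
  calc ∑' q : ℤ × ℤ,
        ENNReal.ofReal (a q.1 q.2 * (((2:ℝ)^q.1)⁻¹ * ∫ x in dyadicI q.1 q.2, |h x|) ^ 2)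
      = ∑' q : ℤ × ℤ, b q * (davg F q.1 q.2) ^ (2:ℕ) := tsum_congr hLHS
    _ ≤ ∑' q : ℤ × ℤ, b q *
          ∑' k : ℤ, (if (2:ℝ≥0∞)^k < davg F q.1 q.2 then 16 * ((2:ℝ≥0∞)^k)^(2:ℕ) else 0) :=
        ENNReal.tsum_le_tsum fun q =>
          mul_le_mul_right (sq_le_tsum (davg_ne_top hFm hTne q.1 q.2)) _
    _ = ∑' q : ℤ × ℤ, ∑' k : ℤ,
          (if (2:ℝ≥0∞)^k < davg F q.1 q.2 then 16 * ((2:ℝ≥0∞)^k)^(2:ℕ) * b q else 0) := by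
        refine tsum_congr fun q => ?_
        rw [← ENNReal.tsum_mul_left]
        refine tsum_congr fun k => ?_
        by_cases hc : (2:ℝ≥0∞)^k < davg F q.1 q.2
        · rw [if_pos hc, if_pos hc]; ring
        · rw [if_neg hc, if_neg hc, mul_zero]
    _ = ∑' k : ℤ, ∑' q : ℤ × ℤ,
          (if (2:ℝ≥0∞)^k < davg F q.1 q.2 then 16 * ((2:ℝ≥0∞)^k)^(2:ℕ) * b q else 0) :=
        ENNReal.tsum_comm
    _ ≤ ∑' k : ℤ, 16 * ((2:ℝ≥0∞)^k)^(2:ℕ) *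
          (A' * (2 * ((2:ℝ≥0∞)^k)⁻¹ *
            ∫⁻ x, (if (2:ℝ≥0∞)^k < 2 * F x then F x else 0))) := by
        refine ENNReal.tsum_le_tsum fun k => ?_
        have h5 : ∑' q : ℤ × ℤ,
            (if (2:ℝ≥0∞)^k < davg F q.1 q.2 then 16 * ((2:ℝ≥0∞)^k)^(2:ℕ) * b q else 0)
            = 16 * ((2:ℝ≥0∞)^k)^(2:ℕ) *
              ∑' q : ℤ × ℤ, (if (2:ℝ≥0∞)^k < davg F q.1 q.2 then b q else 0) := by
          rw [← ENNReal.tsum_mul_left]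
          refine tsum_congr fun q => ?_
          by_cases hc : (2:ℝ≥0∞)^k < davg F q.1 q.2
          · rw [if_pos hc, if_pos hc]
          · rw [if_neg hc, if_neg hc, mul_zero]
        rw [h5]
        exact mul_le_mul_right
          (levelset hFm hTne b hC' (e_two_zpow_ne_zero k) (e_two_zpow_ne_top k)) _
    _ = ∑' k : ℤ, 32 * A' *
          ((2:ℝ≥0∞)^k * ∫⁻ x, (if (2:ℝ≥0∞)^k < 2 * F x then F x else 0)) := by
        refine tsum_congr fun k => ?_
        have hcc : (2:ℝ≥0∞)^k * ((2:ℝ≥0∞)^k)⁻¹ = 1 :=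
          ENNReal.mul_inv_cancel (e_two_zpow_ne_zero k) (e_two_zpow_ne_top k)
        calc 16 * ((2:ℝ≥0∞)^k)^(2:ℕ) *
              (A' * (2 * ((2:ℝ≥0∞)^k)⁻¹ *
                ∫⁻ x, (if (2:ℝ≥0∞)^k < 2 * F x then F x else 0)))
            = 32 * A' * (((2:ℝ≥0∞)^k * ((2:ℝ≥0∞)^k)⁻¹) *
                ((2:ℝ≥0∞)^k * ∫⁻ x, (if (2:ℝ≥0∞)^k < 2 * F x then F x else 0))) := by
              ring
          _ = 32 * A' *
                ((2:ℝ≥0∞)^k * ∫⁻ x, (if (2:ℝ≥0∞)^k < 2 * F x then F x else 0)) := by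
              rw [hcc, one_mul]
    _ = 32 * A' * ∑' k : ℤ,
          ((2:ℝ≥0∞)^k * ∫⁻ x, (if (2:ℝ≥0∞)^k < 2 * F x then F x else 0)) :=
        ENNReal.tsum_mul_left
    _ = 32 * A' * ∑' k : ℤ,
          ∫⁻ x, (2:ℝ≥0∞)^k * (if (2:ℝ≥0∞)^k < 2 * F x then F x else 0) := by
        congr 1
        exact tsum_congr fun k => (lintegral_const_mul' _ _ (e_two_zpow_ne_top k)).symm
    _ = 32 * A' *
          ∫⁻ x, ∑' k : ℤ, (2:ℝ≥0∞)^k * (if (2:ℝ≥0∞)^k < 2 * F x then F x else 0) := by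
        congr 1
        refine (lintegral_tsum fun k => ?_).symm
        refine AEMeasurable.const_mul ?_ _
        have hmeas : Measurable (fun y : ℝ≥0∞ => if (2:ℝ≥0∞)^k < 2 * y then y else 0) := by
          refine Measurable.ite ?_ measurable_id measurable_const
          exact measurableSet_lt measurable_const (measurable_id.const_mul 2)
        exact hmeas.comp_aemeasurable hFm
    _ ≤ 32 * A' * ∫⁻ x, 4 * F x ^ (2:ℕ) := by
        refine mul_le_mul_right (lintegral_mono fun x => ?_) _
        have hFxt : F x ≠ ⊤ := by rw [hF]; exact ENNReal.ofReal_ne_top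
        calc ∑' k : ℤ, (2:ℝ≥0∞)^k * (if (2:ℝ≥0∞)^k < 2 * F x then F x else 0)
            = (∑' k : ℤ, (if (2:ℝ≥0∞)^k < 2 * F x then (2:ℝ≥0∞)^k else 0)) * F x := by
              rw [← ENNReal.tsum_mul_right]
              refine tsum_congr fun k => ?_
              by_cases hc : (2:ℝ≥0∞)^k < 2 * F x
              · rw [if_pos hc, if_pos hc]
              · rw [if_neg hc, if_neg hc, mul_zero, zero_mul]
          _ ≤ (4 * F x) * F x := mul_le_mul_left (tsum_pow_le hFxt) _
          _ = 4 * F x ^ (2:ℕ) := by ring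
    _ = 32 * A' * (4 * T) := by
        rw [lintegral_const_mul' 4 _ (by norm_num), hTdef]
    _ = ENNReal.ofReal (128 * A) * eLpNorm h 2 volume ^ 2 := by
        rw [ENNReal.ofReal_mul (by norm_num : (0:ℝ) ≤ 128), hsn,
          show ENNReal.ofReal (128:ℝ) = 128 by
            rw [ENNReal.ofReal_ofNat]]
        ring
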